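/- Let X be a complete CAT(0) space and x₁,x₂,x₃ ∈ X a triple of points whose Gromov products r₁,r₂,r₃ are all positive. Then the infimum ρ := inf over x ∈ X of max{d(x₁,x)/r₁, d(x₂,x)/r₂, d(x₃,x)/r₃} is attained at a unique point m ∈ X, and moreover d(xᵢ,m) = ρ·rᵢ for i = 1,2,3. -/

import Mathlib

open AffineMap Filter Topology

/-- `γ` is a geodesic from `x` to `y`: an isometric embedding of `[0, dist x y]`
with `γ 0 = x` and `γ (dist x y) = y`. -/
def IsGeodesicFrom {X : Type*} [MetricSpace X] (x y : X) (γ : ℝ → X) : Prop :=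
  γ 0 = x ∧ γ (dist x y) = y ∧
    ∀ s ∈ Set.Icc (0:ℝ) (dist x y), ∀ t ∈ Set.Icc (0:ℝ) (dist x y),
      dist (γ s) (γ t) = |s - t|

/-- A metric space is geodesic if every pair of points is joined by a geodesic. -/
def GeodesicSpace (X : Type*) [MetricSpace X] : Prop :=
  ∀ x y : X, ∃ γ : ℝ → X, IsGeodesicFrom x y γ

/-- The point at arclength `t` on the Euclidean segment from `a` to `b`. -/
noncomputable def cmpPt (a b : EuclideanSpace ℝ (Fin 2)) (t : ℝ) :
    EuclideanSpace ℝ (Fin 2) :=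
  AffineMap.lineMap a b (t / dist a b)

/-- A geodesic metric space is CAT(0) if every geodesic triangle satisfies the
comparison inequality with respect to any comparison triangle in the Euclidean
plane: any two points on the sides of the triangle are at distance at most the
distance of the corresponding points (at the same arclength parameters) on the
comparison triangle. -/
def IsCAT0 (X : Type*) [MetricSpace X] : Prop :=
  GeodesicSpace X ∧
  ∀ (x₁ x₂ x₃ : X) (γ₁₂ γ₁₃ γ₂₃ : ℝ → X),
    IsGeodesicFrom x₁ x₂ γ₁₂ → IsGeodesicFrom x₁ x₃ γ₁₃ → IsGeodesicFrom x₂ x₃ γ₂₃ →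
    ∀ (y₁ y₂ y₃ : EuclideanSpace ℝ (Fin 2)),
      dist y₁ y₂ = dist x₁ x₂ → dist y₁ y₃ = dist x₁ x₃ → dist y₂ y₃ = dist x₂ x₃ →
      (∀ s ∈ Set.Icc (0:ℝ) (dist x₁ x₂), ∀ t ∈ Set.Icc (0:ℝ) (dist x₁ x₂),
        dist (γ₁₂ s) (γ₁₂ t) ≤ dist (cmpPt y₁ y₂ s) (cmpPt y₁ y₂ t)) ∧
      (∀ s ∈ Set.Icc (0:ℝ) (dist x₁ x₃), ∀ t ∈ Set.Icc (0:ℝ) (dist x₁ x₃),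
        dist (γ₁₃ s) (γ₁₃ t) ≤ dist (cmpPt y₁ y₃ s) (cmpPt y₁ y₃ t)) ∧
      (∀ s ∈ Set.Icc (0:ℝ) (dist x₂ x₃), ∀ t ∈ Set.Icc (0:ℝ) (dist x₂ x₃),
        dist (γ₂₃ s) (γ₂₃ t) ≤ dist (cmpPt y₂ y₃ s) (cmpPt y₂ y₃ t)) ∧
      (∀ s ∈ Set.Icc (0:ℝ) (dist x₁ x₂), ∀ t ∈ Set.Icc (0:ℝ) (dist x₁ x₃),
        dist (γ₁₂ s) (γ₁₃ t) ≤ dist (cmpPt y₁ y₂ s) (cmpPt y₁ y₃ t)) ∧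
      (∀ s ∈ Set.Icc (0:ℝ) (dist x₁ x₂), ∀ t ∈ Set.Icc (0:ℝ) (dist x₂ x₃),
        dist (γ₁₂ s) (γ₂₃ t) ≤ dist (cmpPt y₁ y₂ s) (cmpPt y₂ y₃ t)) ∧
      (∀ s ∈ Set.Icc (0:ℝ) (dist x₁ x₃), ∀ t ∈ Set.Icc (0:ℝ) (dist x₂ x₃),
        dist (γ₁₃ s) (γ₂₃ t) ≤ dist (cmpPt y₁ y₃ s) (cmpPt y₂ y₃ t))

/-- ρ(x₁,x₂,x₃) for given (Gromov product) radii r₁,r₂,r₃. -/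
noncomputable def rho3 {X : Type*} [MetricSpace X] (x₁ x₂ x₃ : X) (r₁ r₂ r₃ : ℝ) : ℝ :=
  ⨅ x : X, max (dist x₁ x / r₁) (max (dist x₂ x / r₂) (dist x₃ x / r₃))

/-! ### Auxiliary lemmas -/

lemma stmt3_inner_aux (u v : EuclideanSpace ℝ (Fin 2)) (l : ℝ) :
    ‖(1-l) • u + l • v‖ ^ 2
      = (1-l) * ‖u‖ ^ 2 + l * ‖v‖ ^ 2 - l * (1-l) * ‖v - u‖ ^ 2 := by
  rw [norm_add_sq_real, norm_sub_sq_real, norm_smul, norm_smul,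
    real_inner_smul_left, real_inner_smul_right]
  simp only [Real.norm_eq_abs, mul_pow, sq_abs]
  rw [real_inner_comm v u]
  ring

lemma stmt3_euclid_sq (a b c : EuclideanSpace ℝ (Fin 2)) (l : ℝ) :
    dist a (lineMap b c l) ^ 2
      = (1-l) * dist a b ^ 2 + l * dist a c ^ 2 - l * (1-l) * dist b c ^ 2 := by
  have h : a - (lineMap b c l : EuclideanSpace ℝ (Fin 2)) = (1-l) • (a - b) + l • (a - c) := by
    simp [AffineMap.lineMap_apply_module]; module
  have e1 : b - c = (a - c) - (a - b) := by abel
  rw [dist_eq_norm, dist_eq_norm, dist_eq_norm, dist_eq_norm, h, e1, stmt3_inner_aux]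

lemma stmt3_euclid_le (a b c : EuclideanSpace ℝ (Fin 2)) {l : ℝ} (h0 : 0 ≤ l) (h1 : l ≤ 1) :
    dist a (lineMap b c l) ≤ (1-l) * dist a b + l * dist a c := by
  have h : a - (lineMap b c l : EuclideanSpace ℝ (Fin 2)) = (1-l) • (a - b) + l • (a - c) := by
    simp [AffineMap.lineMap_apply_module]; module
  rw [dist_eq_norm, h, dist_eq_norm, dist_eq_norm]
  refine (norm_add_le _ _).trans ?_
  rw [norm_smul, norm_smul]
  simp [Real.norm_eq_abs, abs_of_nonneg h0, abs_of_nonneg (by linarith : (0:ℝ) ≤ 1 - l)]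

noncomputable def stmt3_pt (x y : ℝ) : EuclideanSpace ℝ (Fin 2) :=
  (WithLp.equiv 2 (Fin 2 → ℝ)).symm ![x, y]

lemma stmt3_dist_pt (x y a b : ℝ) :
    dist (stmt3_pt x y) (stmt3_pt a b) = Real.sqrt ((x-a)^2 + (y-b)^2) := by
  simp [stmt3_pt, EuclideanSpace.dist_eq, Fin.sum_univ_two, Real.dist_eq, sq_abs]

lemma stmt3_cmp_triangle (a b c : ℝ) (ha : 0 ≤ a) (hb : 0 ≤ b) (hc : 0 ≤ c)
    (t1 : c ≤ a + b) (t2 : b ≤ a + c) (t3 : a ≤ b + c) :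
    ∃ y₁ y₂ y₃ : EuclideanSpace ℝ (Fin 2),
      dist y₁ y₂ = a ∧ dist y₁ y₃ = b ∧ dist y₂ y₃ = c := by
  rcases eq_or_lt_of_le ha with h0 | h0
  · have hbc : b = c := le_antisymm (by linarith) (by linarith)
    refine ⟨stmt3_pt 0 0, stmt3_pt 0 0, stmt3_pt b 0, ?_, ?_, ?_⟩
    · simp [stmt3_dist_pt, ← h0]
    · rw [stmt3_dist_pt, show (0-b)^2 + (0-0:ℝ)^2 = b^2 by ring, Real.sqrt_sq hb]
    · rw [stmt3_dist_pt, show (0-b)^2 + (0-0:ℝ)^2 = b^2 by ring, Real.sqrt_sq hb]; exact hbc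
  · obtain ⟨p, hp⟩ : ∃ p : ℝ, p = (a^2 + b^2 - c^2) / (2*a) := ⟨_, rfl⟩
    have hq2 : 0 ≤ b^2 - p^2 := by
      have h4 : b^2 - p^2 = ((c^2 - (a-b)^2) * ((a+b)^2 - c^2)) / (4*a^2) := by
        rw [hp]; field_simp; ring
      rw [h4]
      apply div_nonneg _ (by positivity)
      apply mul_nonneg <;> nlinarith
    obtain ⟨q, hqdef⟩ : ∃ q : ℝ, q = Real.sqrt (b^2 - p^2) := ⟨_, rfl⟩
    have hq : q^2 = b^2 - p^2 := by rw [hqdef]; exact Real.sq_sqrt hq2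
    have h2ap : 2*a*p = a^2 + b^2 - c^2 := by rw [hp]; field_simp
    refine ⟨stmt3_pt 0 0, stmt3_pt a 0, stmt3_pt p q, ?_, ?_, ?_⟩
    · rw [stmt3_dist_pt, show (0-a)^2 + (0-0:ℝ)^2 = a^2 by ring, Real.sqrt_sq ha]
    · rw [stmt3_dist_pt, show (0-p)^2 + (0-q)^2 = b^2 by nlinarith [hq], Real.sqrt_sq hb]
    · rw [stmt3_dist_pt, show (a-p)^2 + (0-q)^2 = c^2 by nlinarith [hq, h2ap], Real.sqrt_sq hc]

lemma stmt3_conv_bound {X : Type*} [MetricSpace X] (hX : IsCAT0 X) (m p : X) (γ : ℝ → X)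
    (hγ : IsGeodesicFrom m p γ) (q : X) (l : ℝ) (h0 : 0 ≤ l) (h1 : l ≤ 1) :
    dist q (γ (l * dist m p)) ≤ (1-l) * dist q m + l * dist q p ∧
    dist q (γ (l * dist m p)) ^ 2
      ≤ (1-l) * dist q m ^ 2 + l * dist q p ^ 2 - l * (1-l) * dist m p ^ 2 := by
  rcases eq_or_lt_of_le (dist_nonneg : (0:ℝ) ≤ dist m p) with hL | hL
  · have hpm : p = m := by rw [← dist_eq_zero, dist_comm, ← hL]
    have hz : γ (l * dist m p) = m := by rw [← hL]; simpa using hγ.1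
    rw [hz, hpm]
    simp only [dist_self]
    constructor
    · nlinarith [dist_nonneg (x := q) (y := m)]
    · nlinarith [dist_nonneg (x := q) (y := m), sq_nonneg (dist q m)]
  · obtain ⟨γ₁₂, hγ₁₂⟩ := hX.1 q m
    obtain ⟨γ₁₃, hγ₁₃⟩ := hX.1 q p
    obtain ⟨y₁, y₂, y₃, e12, e13, e23⟩ :=
      stmt3_cmp_triangle (dist q m) (dist q p) (dist m p) dist_nonneg dist_nonneg dist_nonneg
        (dist_triangle m q p |>.trans_eq (by rw [dist_comm m q]))
        (dist_triangle q m p)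
        ((dist_triangle q p m).trans_eq (by rw [dist_comm p m]))
    obtain ⟨-, -, -, -, key, -⟩ := hX.2 q m p γ₁₂ γ₁₃ γ hγ₁₂ hγ₁₃ hγ y₁ y₂ y₃ e12 e13 e23
    have ht : l * dist m p ∈ Set.Icc (0:ℝ) (dist m p) :=
      ⟨mul_nonneg h0 dist_nonneg, by nlinarith⟩
    have hkey := key 0 ⟨le_refl 0, dist_nonneg⟩ (l * dist m p) ht
    rw [hγ₁₂.1] at hkey
    have hc1 : cmpPt y₁ y₂ 0 = y₁ := by simp [cmpPt]
    have hc2 : cmpPt y₂ y₃ (l * dist m p) = lineMap y₂ y₃ l := by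
      rw [cmpPt, e23, mul_div_assoc, div_self (ne_of_gt hL), mul_one]
    rw [hc1, hc2] at hkey
    constructor
    · refine hkey.trans ?_
      rw [← e12, ← e13]
      exact stmt3_euclid_le y₁ y₂ y₃ h0 h1
    · have h2 : dist q (γ (l * dist m p)) ^ 2 ≤ dist y₁ (lineMap y₂ y₃ l) ^ 2 := by
        apply sq_le_sq' _ hkey
        nlinarith [dist_nonneg (x := y₁) (y := (lineMap y₂ y₃ l : EuclideanSpace ℝ (Fin 2))),
          dist_nonneg (x := q) (y := γ (l * dist m p))]
      refine h2.trans_eq ?_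
      rw [stmt3_euclid_sq, e12, e13, e23]

lemma stmt3_min_exists {X : Type*} [MetricSpace X] [CompleteSpace X] [Nonempty X]
    (F : X → ℝ) (hFc : Continuous F) (hF1 : ∀ x, 1 ≤ F x) (R : ℝ) (hR : 0 < R)
    (hmid : ∀ x y : X, ∃ z, F z ^ 2 ≤ F x ^ 2 / 2 + F y ^ 2 / 2 - dist x y ^ 2 / (4 * R ^ 2)) :
    ∃ m : X, F m = ⨅ x, F x ∧ ∀ m', F m' = ⨅ x, F x → m' = m := by
  set ρ := ⨅ x, F x with hρdef
  have bdd : BddBelow (Set.range F) := ⟨1, by rintro _ ⟨x, rfl⟩; exact hF1 x⟩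
  have hle : ∀ x, ρ ≤ F x := fun x => ciInf_le bdd x
  have hρ0 : (0:ℝ) ≤ ρ := le_trans zero_le_one (le_ciInf hF1)
  have dd : ∀ x y : X, dist x y ^ 2 ≤ 2*R^2*((F x^2 - ρ^2) + (F y^2 - ρ^2)) := by
    intro x y
    obtain ⟨z, hz⟩ := hmid x y
    have h1 : ρ^2 ≤ F z^2 := by nlinarith [hle z]
    have h2 : dist x y^2 / (4*R^2) ≤ (F x^2 - ρ^2)/2 + (F y^2 - ρ^2)/2 := by linarith
    have h3 := (div_le_iff₀ (by positivity : (0:ℝ) < 4*R^2)).mp h2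
    nlinarith [h3]
  have hseq : ∀ n : ℕ, ∃ x : X, F x < ρ + 1/(n+1) := by
    intro n
    apply exists_lt_of_ciInf_lt
    rw [← hρdef]
    exact lt_add_of_pos_right ρ (by positivity)
  choose u hu using hseq
  have hFb : ∀ n : ℕ, F (u n)^2 - ρ^2 ≤ (2*ρ+1) * (1/((n:ℝ)+1)) := by
    intro n
    have h1 := hu n
    have h2 := hle (u n)
    have h3 : 1/((n:ℝ)+1) ≤ 1 := by
      rw [div_le_one (by positivity)]
      linarith [Nat.cast_nonneg (α := ℝ) n]
    have h4 : (0:ℝ) < 1/((n:ℝ)+1) := by positivity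
    nlinarith
  have hcau : CauchySeq u := by
    apply cauchySeq_of_le_tendsto_0 (fun N : ℕ => Real.sqrt (4*R^2*(2*ρ+1)*(1/((N:ℝ)+1))))
    · intro n m' N hn hm
      have e1 : 1/((n:ℝ)+1) ≤ 1/((N:ℝ)+1) := by
        apply one_div_le_one_div_of_le (by positivity)
        have := (Nat.cast_le (α := ℝ)).mpr hn
        linarith
      have e2 : 1/((m':ℝ)+1) ≤ 1/((N:ℝ)+1) := by
        apply one_div_le_one_div_of_le (by positivity)
        have := (Nat.cast_le (α := ℝ)).mpr hm
        linarith
      have c1 : (2*ρ+1)*(1/((n:ℝ)+1)) ≤ (2*ρ+1)*(1/((N:ℝ)+1)) :=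
        mul_le_mul_of_nonneg_left e1 (by linarith)
      have c2 : (2*ρ+1)*(1/((m':ℝ)+1)) ≤ (2*ρ+1)*(1/((N:ℝ)+1)) :=
        mul_le_mul_of_nonneg_left e2 (by linarith)
      have c3 : (F (u n)^2 - ρ^2) + (F (u m')^2 - ρ^2) ≤ 2*((2*ρ+1)*(1/((N:ℝ)+1))) := by
        linarith [hFb n, hFb m']
      have c4 := mul_le_mul_of_nonneg_left c3 (by positivity : (0:ℝ) ≤ 2*R^2)
      have key : dist (u n) (u m')^2 ≤ 4*R^2*(2*ρ+1)*(1/((N:ℝ)+1)) := by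
        calc dist (u n) (u m')^2 ≤ _ := dd (u n) (u m')
          _ ≤ 2*R^2*(2*((2*ρ+1)*(1/((N:ℝ)+1)))) := c4
          _ = 4*R^2*(2*ρ+1)*(1/((N:ℝ)+1)) := by ring
      have hs := Real.sqrt_le_sqrt key
      rwa [Real.sqrt_sq dist_nonneg] at hs
    · have t1 : Tendsto (fun N : ℕ => 4*R^2*(2*ρ+1)*(1/((N:ℝ)+1))) atTop (𝓝 0) := by
        have h := tendsto_one_div_add_atTop_nhds_zero_nat (𝕜 := ℝ)
        simpa using h.const_mul (4*R^2*(2*ρ+1))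
      have t2 := (Real.continuous_sqrt.tendsto 0).comp t1
      simpa [Function.comp_def, Real.sqrt_zero] using t2
  obtain ⟨m, hm⟩ := cauchySeq_tendsto_of_complete hcau
  have hFm : F m = ρ := by
    have h1 : Tendsto (fun n => F (u n)) atTop (𝓝 (F m)) := (hFc.tendsto m).comp hm
    have h2 : Tendsto (fun n => F (u n)) atTop (𝓝 ρ) := by
      have hg : Tendsto (fun n : ℕ => ρ + 1/((n:ℝ)+1)) atTop (𝓝 ρ) := by
        have h := tendsto_one_div_add_atTop_nhds_zero_nat (𝕜 := ℝ)
        simpa using tendsto_const_nhds.add h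
      exact tendsto_of_tendsto_of_tendsto_of_le_of_le tendsto_const_nhds hg
        (fun n => hle (u n)) (fun n => (hu n).le)
    exact tendsto_nhds_unique h1 h2
  refine ⟨m, hFm, ?_⟩
  intro m' hm'
  have hd := dd m' m
  rw [hm', hFm] at hd
  have hd0 : dist m' m ^ 2 ≤ 0 := by linarith [hd]
  have hdz : dist m' m = 0 := by
    nlinarith [dist_nonneg (x := m') (y := m), sq_nonneg (dist m' m)]
  exact eq_of_dist_eq_zero hdz

lemma stmt3_radius_eq {X : Type*} [MetricSpace X] (hX : IsCAT0 X) (a b c m : X)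
    (ra rb rc ρ : ℝ) (hra : 0 < ra) (hrb : 0 < rb) (hrc : 0 < rc)
    (hab : dist a b = ra + rb) (hbc : dist b c = rb + rc) (hρ : 1 ≤ ρ)
    (hma : dist a m ≤ ρ * ra) (hmb : dist b m ≤ ρ * rb) (hmc : dist c m ≤ ρ * rc)
    (hmin : ∀ z : X, ρ * ra ≤ dist a z ∨ ρ * rb ≤ dist b z ∨ ρ * rc ≤ dist c z) :
    dist a m = ρ * ra := by
  by_contra hne
  have hlt : dist a m < ρ * ra := lt_of_le_of_ne hma hne
  rcases eq_or_lt_of_le hρ with h1 | h1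
  · have ht2 : dist a b ≤ dist a m + dist m b := dist_triangle a m b
    rw [dist_comm m b] at ht2
    rw [← h1] at hlt hmb
    linarith
  · obtain ⟨γbc, hγbc⟩ := hX.1 b c
    obtain ⟨p, hp⟩ : ∃ p : X, p = γbc rb := ⟨_, rfl⟩
    have hrb_mem : rb ∈ Set.Icc (0:ℝ) (dist b c) := ⟨hrb.le, by rw [hbc]; linarith⟩
    have h0mem : (0:ℝ) ∈ Set.Icc (0:ℝ) (dist b c) := ⟨le_refl 0, dist_nonneg⟩
    have hLmem : dist b c ∈ Set.Icc (0:ℝ) (dist b c) := ⟨dist_nonneg, le_refl _⟩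
    have hbp : dist b p = rb := by
      have h := hγbc.2.2 0 h0mem rb hrb_mem
      rw [hγbc.1] at h
      rw [hp, h, abs_of_nonpos (by linarith)]; ring
    have hcp : dist c p = rc := by
      have h := hγbc.2.2 rb hrb_mem (dist b c) hLmem
      rw [hγbc.2.1] at h
      rw [hp, dist_comm, h, hbc, abs_of_nonpos (by linarith)]; ring
    obtain ⟨γ, hγ⟩ := hX.1 m p
    obtain ⟨l, hl⟩ : ∃ l : ℝ, l = min (1/2) ((ρ*ra - dist a m) / (2*(dist a p + 1))) := ⟨_, rfl⟩
    have hl0 : 0 < l := by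
      rw [hl]
      exact lt_min (by norm_num) (div_pos (by linarith) (by positivity))
    have hl1 : l ≤ 1 := by rw [hl]; exact (min_le_left _ _).trans (by norm_num)
    have hlap : l * (dist a p + 1) ≤ (ρ*ra - dist a m)/2 := by
      have h2 : l ≤ (ρ*ra - dist a m) / (2*(dist a p + 1)) := hl ▸ min_le_right _ _
      have h3 : (0:ℝ) < dist a p + 1 := by positivity
      calc l * (dist a p + 1) ≤ ((ρ*ra - dist a m) / (2*(dist a p + 1))) * (dist a p + 1) :=
            mul_le_mul_of_nonneg_right h2 h3.le
        _ = (ρ*ra - dist a m)/2 := by field_simp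
    obtain ⟨z, hz⟩ : ∃ z : X, z = γ (l * dist m p) := ⟨_, rfl⟩
    have hza : dist a z < ρ * ra := by
      have hcb := (stmt3_conv_bound hX m p γ hγ a l hl0.le hl1).1
      rw [← hz] at hcb
      have hh : (1-l) * dist a m ≤ dist a m := by nlinarith [dist_nonneg (x := a) (y := m)]
      nlinarith [dist_nonneg (x := a) (y := p)]
    have hzb : dist b z < ρ * rb := by
      have hcb := (stmt3_conv_bound hX m p γ hγ b l hl0.le hl1).1
      rw [← hz, hbp] at hcb
      nlinarith [mul_le_mul_of_nonneg_left hmb (by linarith : (0:ℝ) ≤ 1 - l),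
        mul_pos (mul_pos hl0 hrb) (by linarith : (0:ℝ) < ρ - 1)]
    have hzc : dist c z < ρ * rc := by
      have hcb := (stmt3_conv_bound hX m p γ hγ c l hl0.le hl1).1
      rw [← hz, hcp] at hcb
      nlinarith [mul_le_mul_of_nonneg_left hmc (by linarith : (0:ℝ) ≤ 1 - l),
        mul_pos (mul_pos hl0 hrc) (by linarith : (0:ℝ) < ρ - 1)]
    rcases hmin z with h | h | h
    · linarith
    · linarith
    · linarith

theorem stmt3 {X : Type*} [MetricSpace X] [CompleteSpace X] (hX : IsCAT0 X)
    (x₁ x₂ x₃ : X) (r₁ r₂ r₃ : ℝ)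
    (hr₁ : r₁ = (dist x₁ x₂ + dist x₁ x₃ - dist x₂ x₃) / 2)
    (hr₂ : r₂ = (dist x₁ x₂ + dist x₂ x₃ - dist x₁ x₃) / 2)
    (hr₃ : r₃ = (dist x₁ x₃ + dist x₂ x₃ - dist x₁ x₂) / 2)
    (h₁ : 0 < r₁) (h₂ : 0 < r₂) (h₃ : 0 < r₃) :
    ∃ m : X,
      max (dist x₁ m / r₁) (max (dist x₂ m / r₂) (dist x₃ m / r₃))
          = rho3 x₁ x₂ x₃ r₁ r₂ r₃ ∧
      (∀ m' : X,
        max (dist x₁ m' / r₁) (max (dist x₂ m' / r₂) (dist x₃ m' / r₃))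
            = rho3 x₁ x₂ x₃ r₁ r₂ r₃ → m' = m) ∧
      dist x₁ m = rho3 x₁ x₂ x₃ r₁ r₂ r₃ * r₁ ∧
      dist x₂ m = rho3 x₁ x₂ x₃ r₁ r₂ r₃ * r₂ ∧
      dist x₃ m = rho3 x₁ x₂ x₃ r₁ r₂ r₃ * r₃ := by
  haveI : Nonempty X := ⟨x₁⟩
  have hd12 : dist x₁ x₂ = r₁ + r₂ := by rw [hr₁, hr₂]; ring
  have hd13 : dist x₁ x₃ = r₁ + r₃ := by rw [hr₁, hr₃]; ring
  have hd23 : dist x₂ x₃ = r₂ + r₃ := by rw [hr₂, hr₃]; ring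
  set R : ℝ := max r₁ (max r₂ r₃) with hRdef
  have hR : 0 < R := lt_of_lt_of_le h₁ (le_max_left _ _)
  set F : X → ℝ := fun x => max (dist x₁ x / r₁) (max (dist x₂ x / r₂) (dist x₃ x / r₃))
    with hFdef
  have hcont : Continuous F := by
    apply Continuous.max
    · exact (continuous_const.dist continuous_id).div_const r₁
    · exact Continuous.max ((continuous_const.dist continuous_id).div_const r₂)
        ((continuous_const.dist continuous_id).div_const r₃)
  have hge1 : ∀ x, 1 ≤ F x := by
    intro x
    by_contra h
    push_neg at h
    rw [hFdef] at h
    simp only [max_lt_iff] at h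
    obtain ⟨hA, hB, hC⟩ := h
    have hA' : dist x₁ x < r₁ := by rwa [div_lt_one h₁] at hA
    have hB' : dist x₂ x < r₂ := by rwa [div_lt_one h₂] at hB
    have ht : dist x₁ x₂ ≤ dist x₁ x + dist x x₂ := dist_triangle x₁ x x₂
    rw [dist_comm x x₂] at ht
    linarith
  have hmid : ∀ x y : X, ∃ z, F z ^ 2 ≤ F x ^ 2 / 2 + F y ^ 2 / 2 - dist x y ^ 2 / (4 * R ^ 2) := by
    intro x y
    obtain ⟨γ, hγ⟩ := hX.1 x y
    obtain ⟨z, hzdef⟩ : ∃ z : X, z = γ ((1/2 : ℝ) * dist x y) := ⟨_, rfl⟩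
    refine ⟨z, ?_⟩
    have gen : ∀ (q : X) (r : ℝ), 0 < r → r ≤ R →
        (∀ w : X, dist q w / r ≤ F w) →
        (dist q z / r) ^ 2 ≤ F x ^ 2 / 2 + F y ^ 2 / 2 - dist x y ^ 2 / (4 * R ^ 2) := by
      intro q r hr0 hrR hqF
      have hcb := (stmt3_conv_bound hX x y γ hγ q (1/2) (by norm_num) (by norm_num)).2
      rw [← hzdef] at hcb
      have hx2 : (dist q x / r)^2 ≤ F x ^ 2 :=
        pow_le_pow_left₀ (by positivity) (hqF x) 2
      have hy2 : (dist q y / r)^2 ≤ F y ^ 2 :=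
        pow_le_pow_left₀ (by positivity) (hqF y) 2
      have hr2 : (0:ℝ) < r^2 := by positivity
      have hrR2 : r^2 ≤ R^2 := pow_le_pow_left₀ hr0.le hrR 2
      have hDD : dist x y ^ 2/(4*R^2) ≤ dist x y ^ 2/(4*r^2) :=
        div_le_div_of_nonneg_left (sq_nonneg _) (by positivity) (by linarith)
      calc (dist q z / r)^2 = dist q z ^ 2 / r^2 := div_pow _ _ 2
        _ ≤ ((1/2)*dist q x^2 + (1/2)*dist q y^2 - (1/4)*dist x y^2)/r^2 := by
            gcongr
            linarith [hcb]
        _ = (1/2)*(dist q x/r)^2 + (1/2)*(dist q y/r)^2 - dist x y^2/(4*r^2) := by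
            field_simp
        _ ≤ F x ^ 2 / 2 + F y ^ 2 / 2 - dist x y ^ 2 / (4 * R ^ 2) := by
            linarith [hx2, hy2, hDD]
    have h1 : ∀ w : X, dist x₁ w / r₁ ≤ F w := fun w => le_max_left _ _
    have h2 : ∀ w : X, dist x₂ w / r₂ ≤ F w :=
      fun w => (le_max_left _ _).trans (le_max_right _ _)
    have h3 : ∀ w : X, dist x₃ w / r₃ ≤ F w :=
      fun w => (le_max_right _ _).trans (le_max_right _ _)
    have hmax : F z = dist x₁ z / r₁ ∨ F z = dist x₂ z / r₂ ∨ F z = dist x₃ z / r₃ := by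
      rcases max_choice (dist x₁ z / r₁) (max (dist x₂ z / r₂) (dist x₃ z / r₃)) with h | h
      · left; exact h
      · rcases max_choice (dist x₂ z / r₂) (dist x₃ z / r₃) with h' | h'
        · right; left; rw [hFdef]; simp only []; rw [h, h']
        · right; right; rw [hFdef]; simp only []; rw [h, h']
    rcases hmax with h | h | h
    · rw [h]; exact gen x₁ r₁ h₁ (le_max_left _ _) h1
    · rw [h]; exact gen x₂ r₂ h₂ ((le_max_left _ _).trans (le_max_right _ _)) h2
    · rw [h]; exact gen x₃ r₃ h₃ ((le_max_right _ _).trans (le_max_right _ _)) h3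
  obtain ⟨m, hFm, huniq⟩ := stmt3_min_exists F hcont hge1 R hR hmid
  have hρeq : rho3 x₁ x₂ x₃ r₁ r₂ r₃ = ⨅ x, F x := rfl
  set ρ : ℝ := ⨅ x, F x with hρdef
  have bdd : BddBelow (Set.range F) := ⟨1, by rintro _ ⟨x, rfl⟩; exact hge1 x⟩
  have hρle : ∀ x, ρ ≤ F x := fun x => ciInf_le bdd x
  have hρ1 : (1:ℝ) ≤ ρ := le_ciInf hge1
  have hFmρ : F m = ρ := hFm
  have hm1 : dist x₁ m ≤ ρ * r₁ := by
    have := le_max_left (dist x₁ m / r₁) (max (dist x₂ m / r₂) (dist x₃ m / r₃))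
    rw [show max (dist x₁ m / r₁) (max (dist x₂ m / r₂) (dist x₃ m / r₃)) = F m from rfl,
      hFmρ] at this
    exact (div_le_iff₀ h₁).mp this
  have hm2 : dist x₂ m ≤ ρ * r₂ := by
    have := (le_max_left (dist x₂ m / r₂) (dist x₃ m / r₃)).trans
      (le_max_right (dist x₁ m / r₁) _)
    rw [show max (dist x₁ m / r₁) (max (dist x₂ m / r₂) (dist x₃ m / r₃)) = F m from rfl,
      hFmρ] at this
    exact (div_le_iff₀ h₂).mp this
  have hm3 : dist x₃ m ≤ ρ * r₃ := by
    have := (le_max_right (dist x₂ m / r₂) (dist x₃ m / r₃)).trans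
      (le_max_right (dist x₁ m / r₁) _)
    rw [show max (dist x₁ m / r₁) (max (dist x₂ m / r₂) (dist x₃ m / r₃)) = F m from rfl,
      hFmρ] at this
    exact (div_le_iff₀ h₃).mp this
  have hmin' : ∀ z : X, ρ * r₁ ≤ dist x₁ z ∨ ρ * r₂ ≤ dist x₂ z ∨ ρ * r₃ ≤ dist x₃ z := by
    intro z
    have h := hρle z
    rw [show F z = max (dist x₁ z / r₁) (max (dist x₂ z / r₂) (dist x₃ z / r₃)) from rfl] at h
    rcases le_max_iff.mp h with h | h
    · left; exact (le_div_iff₀ h₁).mp h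
    · rcases le_max_iff.mp h with h | h
      · right; left; exact (le_div_iff₀ h₂).mp h
      · right; right; exact (le_div_iff₀ h₃).mp h
  have eq1 : dist x₁ m = ρ * r₁ :=
    stmt3_radius_eq hX x₁ x₂ x₃ m r₁ r₂ r₃ ρ h₁ h₂ h₃ hd12 hd23 hρ1 hm1 hm2 hm3 hmin'
  have eq2 : dist x₂ m = ρ * r₂ := by
    apply stmt3_radius_eq hX x₂ x₁ x₃ m r₂ r₁ r₃ ρ h₂ h₁ h₃ ?_ hd13 hρ1 hm2 hm1 hm3 ?_
    · rw [dist_comm, hd12]; ring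
    · intro z; rcases hmin' z with h | h | h
      · right; left; exact h
      · left; exact h
      · right; right; exact h
  have eq3 : dist x₃ m = ρ * r₃ := by
    apply stmt3_radius_eq hX x₃ x₁ x₂ m r₃ r₁ r₂ ρ h₃ h₁ h₂ ?_ hd12 hρ1 hm3 hm1 hm2 ?_
    · rw [dist_comm, hd13]; ring
    · intro z; rcases hmin' z with h | h | h
      · right; left; exact h
      · right; right; exact h
      · left; exact h
  refine ⟨m, ?_, ?_, ?_, ?_, ?_⟩
  · rw [hρeq]; exact hFm
  · intro m' hm'
    apply huniq
    rw [← hρeq]; exact hm'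
  · rw [hρeq]; exact eq1
  · rw [hρeq]; exact eq2
  · rw [hρeq]; exact eq3
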